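/- arXiv:2603.21514 — 4 statements merged into one kernel-verified Lean document; each statement's English description precedes it below -/
import Mathlib

section
/- For all indices i ≠ j and every point (δ, V) ∈ ℝ^N × ℝ^N, the following mixed second-order partial derivatives of the active power all equal ∂Q_i/∂δ_j: − V_i V_j · ∂²P_i/∂V_i∂V_j = − ∂²P_i/∂δ_i∂δ_j = V_i · ∂²Q_i/∂V_i∂δ_j = − V_j · ∂²Q_i/∂V_j∂δ_i = ∂Q_i/∂δ_j, all evaluated at (δ, V). -/
noncomputable def Pinj (N : ℕ) (G B : Fin N → Fin N → ℝ) (i : Fin N) :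
    (Fin N → ℝ) × (Fin N → ℝ) → ℝ :=
  fun x => x.2 i * ∑ j, x.2 j *
    (G i j * Real.cos (x.1 i - x.1 j) + B i j * Real.sin (x.1 i - x.1 j))

noncomputable def Qinj (N : ℕ) (G B : Fin N → Fin N → ℝ) (i : Fin N) :
    (Fin N → ℝ) × (Fin N → ℝ) → ℝ :=
  fun x => x.2 i * ∑ j, x.2 j *
    (G i j * Real.sin (x.1 i - x.1 j) - B i j * Real.cos (x.1 i - x.1 j))

noncomputable def pdA (N : ℕ) (j : Fin N) (f : (Fin N → ℝ) × (Fin N → ℝ) → ℝ) :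
    (Fin N → ℝ) × (Fin N → ℝ) → ℝ :=
  fun x => fderiv ℝ f x (Pi.single j 1, 0)

noncomputable def pdM (N : ℕ) (j : Fin N) (f : (Fin N → ℝ) × (Fin N → ℝ) → ℝ) :
    (Fin N → ℝ) × (Fin N → ℝ) → ℝ :=
  fun x => fderiv ℝ f x (0, Pi.single j 1)

lemma diffP (N : ℕ) (G B : Fin N → Fin N → ℝ) (i : Fin N) :
    Differentiable ℝ (Pinj N G B i) := by
  unfold Pinj; fun_prop

lemma diffQ (N : ℕ) (G B : Fin N → Fin N → ℝ) (i : Fin N) :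
    Differentiable ℝ (Qinj N G B i) := by
  unfold Qinj; fun_prop

lemma pdA_eq {N : ℕ} (j : Fin N) (f : (Fin N → ℝ) × (Fin N → ℝ) → ℝ)
    (x : (Fin N → ℝ) × (Fin N → ℝ)) (hf : DifferentiableAt ℝ f x) :
    pdA N j f x = deriv (fun t : ℝ => f (x.1 + t • (Pi.single j 1 : Fin N → ℝ), x.2)) 0 := by
  have hline : HasDerivAt (fun t : ℝ => ((x.1 + t • (Pi.single j 1 : Fin N → ℝ), x.2) :
      (Fin N → ℝ) × (Fin N → ℝ))) ((Pi.single j 1 : Fin N → ℝ), (0 : Fin N → ℝ)) 0 := by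
    refine HasDerivAt.prodMk ?_ (hasDerivAt_const _ _)
    simpa using ((hasDerivAt_id (0:ℝ)).smul_const (Pi.single j 1 : Fin N → ℝ)).const_add x.1
  have hfd : HasFDerivAt f (fderiv ℝ f x)
      ((x.1 + (0:ℝ) • (Pi.single j 1 : Fin N → ℝ), x.2) : (Fin N → ℝ) × (Fin N → ℝ)) := by
    simpa using hf.hasFDerivAt
  exact ((hfd.comp_hasDerivAt 0 hline).deriv).symm

lemma pdM_eq {N : ℕ} (j : Fin N) (f : (Fin N → ℝ) × (Fin N → ℝ) → ℝ)
    (x : (Fin N → ℝ) × (Fin N → ℝ)) (hf : DifferentiableAt ℝ f x) :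
    pdM N j f x = deriv (fun t : ℝ => f (x.1, x.2 + t • (Pi.single j 1 : Fin N → ℝ))) 0 := by
  have hline : HasDerivAt (fun t : ℝ => ((x.1, x.2 + t • (Pi.single j 1 : Fin N → ℝ)) :
      (Fin N → ℝ) × (Fin N → ℝ))) ((0 : Fin N → ℝ), (Pi.single j 1 : Fin N → ℝ)) 0 := by
    refine HasDerivAt.prodMk (hasDerivAt_const _ _) ?_
    simpa using ((hasDerivAt_id (0:ℝ)).smul_const (Pi.single j 1 : Fin N → ℝ)).const_add x.2
  have hfd : HasFDerivAt f (fderiv ℝ f x)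
      ((x.1, x.2 + (0:ℝ) • (Pi.single j 1 : Fin N → ℝ)) : (Fin N → ℝ) × (Fin N → ℝ)) := by
    simpa using hf.hasFDerivAt
  exact ((hfd.comp_hasDerivAt 0 hline).deriv).symm

-- basic 1-D derivative helpers
lemma hd_sin_sub (a e : ℝ) :
    HasDerivAt (fun t : ℝ => Real.sin (a - (e + t))) (-Real.cos (a - e)) 0 := by
  have h : HasDerivAt (fun t : ℝ => a - (e + t)) (-1) 0 := by
    simpa using ((hasDerivAt_id (0:ℝ)).const_add e).const_sub a
  simpa [Function.comp_def] using (Real.hasDerivAt_sin (a - (e + 0))).comp 0 h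

lemma hd_cos_sub (a e : ℝ) :
    HasDerivAt (fun t : ℝ => Real.cos (a - (e + t))) (Real.sin (a - e)) 0 := by
  have h : HasDerivAt (fun t : ℝ => a - (e + t)) (-1) 0 := by
    simpa using ((hasDerivAt_id (0:ℝ)).const_add e).const_sub a
  simpa [Function.comp_def] using (Real.hasDerivAt_cos (a - (e + 0))).comp 0 h

lemma hd_sin_add (a e : ℝ) :
    HasDerivAt (fun t : ℝ => Real.sin (a + t - e)) (Real.cos (a - e)) 0 := by
  have h : HasDerivAt (fun t : ℝ => a + t - e) 1 0 := by
    simpa using ((hasDerivAt_id (0:ℝ)).const_add a).sub_const e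
  simpa [Function.comp_def] using (Real.hasDerivAt_sin (a + 0 - e)).comp 0 h

lemma hd_cos_add (a e : ℝ) :
    HasDerivAt (fun t : ℝ => Real.cos (a + t - e)) (-Real.sin (a - e)) 0 := by
  have h : HasDerivAt (fun t : ℝ => a + t - e) 1 0 := by
    simpa using ((hasDerivAt_id (0:ℝ)).const_add a).sub_const e
  simpa [Function.comp_def] using (Real.hasDerivAt_cos (a + 0 - e)).comp 0 h

lemma F3 (N : ℕ) (G B : Fin N → Fin N → ℝ) (i j : Fin N) (hij : i ≠ j) :
    pdA N j (Qinj N G B i) = fun x => -(x.2 i * x.2 j) *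
      (G i j * Real.cos (x.1 i - x.1 j) + B i j * Real.sin (x.1 i - x.1 j)) := by
  funext x
  rw [pdA_eq j _ x ((diffQ N G B i) x)]
  have key : HasDerivAt
      (fun t : ℝ => Qinj N G B i (x.1 + t • (Pi.single j 1 : Fin N → ℝ), x.2))
      (x.2 i * ∑ k, (if k = j then
        x.2 j * (G i j * (-Real.cos (x.1 i - x.1 j)) - B i j * Real.sin (x.1 i - x.1 j))
        else 0)) 0 := by
    unfold Qinj
    simp only [Pi.add_apply, Pi.smul_apply, smul_eq_mul, Pi.single_apply, mul_ite,
      mul_one, mul_zero, if_neg hij, add_zero]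
    refine HasDerivAt.const_mul _ (HasDerivAt.fun_sum ?_)
    intro k _
    by_cases hk : k = j
    · subst hk
      simp only [if_pos rfl]
      exact (((hd_sin_sub (x.1 i) (x.1 k)).const_mul (G i k)).sub
        ((hd_cos_sub (x.1 i) (x.1 k)).const_mul (B i k))).const_mul (x.2 k)
    · simp only [if_neg hk, add_zero]
      exact hasDerivAt_const _ _
  rw [key.deriv]
  simp [Finset.sum_ite_eq']
  ring

lemma F1 (N : ℕ) (G B : Fin N → Fin N → ℝ) (i j : Fin N) (hij : i ≠ j) :
    pdM N j (Pinj N G B i) = fun x => x.2 i *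
      (G i j * Real.cos (x.1 i - x.1 j) + B i j * Real.sin (x.1 i - x.1 j)) := by
  funext x
  rw [pdM_eq j _ x ((diffP N G B i) x)]
  have key : HasDerivAt
      (fun t : ℝ => Pinj N G B i (x.1, x.2 + t • (Pi.single j 1 : Fin N → ℝ)))
      (x.2 i * ∑ k, (if k = j then
        1 * (G i j * Real.cos (x.1 i - x.1 j) + B i j * Real.sin (x.1 i - x.1 j))
        else 0)) 0 := by
    unfold Pinj
    simp only [Pi.add_apply, Pi.smul_apply, smul_eq_mul, Pi.single_apply, mul_ite,
      mul_one, mul_zero, if_neg hij, add_zero]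
    refine HasDerivAt.const_mul _ (HasDerivAt.fun_sum ?_)
    intro k _
    by_cases hk : k = j
    · subst hk
      simp only [if_pos rfl]
      exact ((hasDerivAt_id 0).const_add (x.2 k)).mul_const _
    · simp only [if_neg hk, add_zero]
      exact hasDerivAt_const _ _
  rw [key.deriv]
  simp [Finset.sum_ite_eq']

lemma F2 (N : ℕ) (G B : Fin N → Fin N → ℝ) (i j : Fin N) (hij : i ≠ j) :
    pdA N j (Pinj N G B i) = fun x => x.2 i * x.2 j *
      (G i j * Real.sin (x.1 i - x.1 j) - B i j * Real.cos (x.1 i - x.1 j)) := by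
  funext x
  rw [pdA_eq j _ x ((diffP N G B i) x)]
  have key : HasDerivAt
      (fun t : ℝ => Pinj N G B i (x.1 + t • (Pi.single j 1 : Fin N → ℝ), x.2))
      (x.2 i * ∑ k, (if k = j then
        x.2 j * (G i j * Real.sin (x.1 i - x.1 j) + B i j * (-Real.cos (x.1 i - x.1 j)))
        else 0)) 0 := by
    unfold Pinj
    simp only [Pi.add_apply, Pi.smul_apply, smul_eq_mul, Pi.single_apply, mul_ite,
      mul_one, mul_zero, if_neg hij, add_zero]
    refine HasDerivAt.const_mul _ (HasDerivAt.fun_sum ?_)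
    intro k _
    by_cases hk : k = j
    · subst hk
      simp only [if_pos rfl]
      exact (((hd_cos_sub (x.1 i) (x.1 k)).const_mul (G i k)).add
        ((hd_sin_sub (x.1 i) (x.1 k)).const_mul (B i k))).const_mul (x.2 k)
    · simp only [if_neg hk, add_zero]
      exact hasDerivAt_const _ _
  rw [key.deriv]
  simp [Finset.sum_ite_eq']
  ring

lemma F4 (N : ℕ) (G B : Fin N → Fin N → ℝ) (i : Fin N) :
    pdA N i (Qinj N G B i) = fun x => x.2 i *
      ∑ k ∈ Finset.univ.erase i, x.2 k *
        (G i k * Real.cos (x.1 i - x.1 k) + B i k * Real.sin (x.1 i - x.1 k)) := by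
  funext x
  rw [pdA_eq i _ x ((diffQ N G B i) x)]
  have key : HasDerivAt
      (fun t : ℝ => Qinj N G B i (x.1 + t • (Pi.single i 1 : Fin N → ℝ), x.2))
      (x.2 i * ∑ k, (if k = i then 0 else
        x.2 k * (G i k * Real.cos (x.1 i - x.1 k) - B i k * (-Real.sin (x.1 i - x.1 k))))) 0 := by
    unfold Qinj
    simp only [Pi.add_apply, Pi.smul_apply, smul_eq_mul, Pi.single_apply, mul_ite,
      mul_one, mul_zero, if_pos rfl]
    refine HasDerivAt.const_mul _ (HasDerivAt.fun_sum ?_)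
    intro k _
    by_cases hk : k = i
    · subst hk
      simp only [if_pos rfl, sub_self, Real.sin_zero, Real.cos_zero]
      exact hasDerivAt_const _ _
    · simp only [if_neg hk, add_zero]
      exact (((hd_sin_add (x.1 i) (x.1 k)).const_mul (G i k)).sub
        ((hd_cos_add (x.1 i) (x.1 k)).const_mul (B i k))).const_mul (x.2 k)
  rw [key.deriv]
  congr 1
  rw [← Finset.sum_erase (a := i) (f := fun k : Fin N => if k = i then (0:ℝ) else x.2 k *
      (G i k * Real.cos (x.1 i - x.1 k) - B i k * (-Real.sin (x.1 i - x.1 k))))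
      Finset.univ (by simp)]
  refine Finset.sum_congr rfl (fun k hk => ?_)
  rw [if_neg (Finset.mem_erase.mp hk).1]
  ring

/-- For `i ≠ j`, the mixed second-order partial derivatives of the active power all
equal `∂Q_i/∂δ_j`:
`−V_i V_j ∂²P_i/∂V_i∂V_j = −∂²P_i/∂δ_i∂δ_j = V_i ∂²Q_i/∂V_i∂δ_j = −V_j ∂²Q_i/∂V_j∂δ_i
 = ∂Q_i/∂δ_j`. -/

theorem stmt8 (N : ℕ) (hN : 1 ≤ N) (G B : Fin N → Fin N → ℝ)
    (i j : Fin N) (hij : i ≠ j) (δ V : Fin N → ℝ) :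
    -(V i * V j) * pdM N i (pdM N j (Pinj N G B i)) (δ, V) =
        pdA N j (Qinj N G B i) (δ, V) ∧
    -(pdA N i (pdA N j (Pinj N G B i)) (δ, V)) = pdA N j (Qinj N G B i) (δ, V) ∧
    V i * pdM N i (pdA N j (Qinj N G B i)) (δ, V) = pdA N j (Qinj N G B i) (δ, V) ∧
    -(V j) * pdM N j (pdA N i (Qinj N G B i)) (δ, V) =
        pdA N j (Qinj N G B i) (δ, V) := by
  set c : ℝ := Real.cos (δ i - δ j) with hc
  set s : ℝ := Real.sin (δ i - δ j) with hs
  -- RHS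
  have hR : pdA N j (Qinj N G B i) (δ, V) = -(V i * V j) * (G i j * c + B i j * s) := by
    rw [F3 N G B i j hij]
  -- (a)
  have ha : pdM N i (pdM N j (Pinj N G B i)) (δ, V) = G i j * c + B i j * s := by
    rw [F1 N G B i j hij, pdM_eq i _ _ (by fun_prop)]
    simp only [Pi.add_apply, Pi.smul_apply, smul_eq_mul, Pi.single_eq_same, mul_one]
    have h : HasDerivAt (fun t : ℝ => (V i + t) * (G i j * c + B i j * s))
        (1 * (G i j * c + B i j * s)) 0 :=
      ((hasDerivAt_id 0).const_add (V i)).mul_const _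
    rw [h.deriv, one_mul]
  -- (b)
  have hb : pdA N i (pdA N j (Pinj N G B i)) (δ, V) =
      V i * V j * (G i j * c - B i j * (-s)) := by
    rw [F2 N G B i j hij, pdA_eq i _ _ (by fun_prop)]
    simp only [Pi.add_apply, Pi.smul_apply, smul_eq_mul, Pi.single_eq_same,
      Pi.single_eq_of_ne hij.symm, mul_one, mul_zero, add_zero]
    have h : HasDerivAt
        (fun t : ℝ => V i * V j * (G i j * Real.sin (δ i + t - δ j) -
          B i j * Real.cos (δ i + t - δ j)))
        (V i * V j * (G i j * Real.cos (δ i - δ j) - B i j * (-Real.sin (δ i - δ j)))) 0 :=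
      (((hd_sin_add (δ i) (δ j)).const_mul (G i j)).sub
        ((hd_cos_add (δ i) (δ j)).const_mul (B i j))).const_mul (V i * V j)
    rw [h.deriv, ← hc, ← hs]
  -- (c)
  have hcc : pdM N i (pdA N j (Qinj N G B i)) (δ, V) =
      -(1 * V j) * (G i j * c + B i j * s) := by
    rw [F3 N G B i j hij, pdM_eq i _ _ (by fun_prop)]
    simp only [Pi.add_apply, Pi.smul_apply, smul_eq_mul, Pi.single_eq_same,
      Pi.single_eq_of_ne hij.symm, mul_one, mul_zero, add_zero, ← hc, ← hs]
    have h : HasDerivAt (fun t : ℝ => -((V i + t) * V j) * (G i j * c + B i j * s))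
        (-(1 * V j) * (G i j * c + B i j * s)) 0 :=
      ((((hasDerivAt_id 0).const_add (V i)).mul_const (V j)).neg).mul_const _
    rw [h.deriv]
  -- (d)
  have hd : pdM N j (pdA N i (Qinj N G B i)) (δ, V) =
      V i * (1 * (G i j * c + B i j * s)) := by
    rw [F4 N G B i, pdM_eq j _ _ (by fun_prop)]
    simp only [Pi.add_apply, Pi.smul_apply, smul_eq_mul, Pi.single_apply, mul_ite,
      mul_one, mul_zero, if_neg hij, add_zero]
    have key : HasDerivAt
        (fun t : ℝ => V i * ∑ k ∈ Finset.univ.erase i,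
          (V k + if k = j then t else 0) *
            (G i k * Real.cos (δ i - δ k) + B i k * Real.sin (δ i - δ k)))
        (V i * ∑ k ∈ Finset.univ.erase i, (if k = j then
          1 * (G i j * Real.cos (δ i - δ j) + B i j * Real.sin (δ i - δ j)) else 0)) 0 := by
      refine HasDerivAt.const_mul _ (HasDerivAt.fun_sum ?_)
      intro k _
      by_cases hk : k = j
      · subst hk
        simp only [if_pos rfl]
        exact ((hasDerivAt_id 0).const_add (V k)).mul_const _
      · simp only [if_neg hk, add_zero]
        exact hasDerivAt_const _ _
    rw [key.deriv, Finset.sum_ite_eq' (Finset.univ.erase i) j]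
    simp [hij.symm, ← hc, ← hs]
  refine ⟨?_, ?_, ?_, ?_⟩ <;> rw [hR]
  · rw [ha]
  · rw [hb]; ring
  · rw [hcc]; ring
  · rw [hd]; ring
end

section
/- For all indices i ≠ j and every point (δ, V) ∈ ℝ^N × ℝ^N, the following mixed second-order partial derivatives of the reactive power all equal ∂P_i/∂δ_j: V_i V_j · ∂²Q_i/∂V_i∂V_j = ∂²Q_i/∂δ_i∂δ_j = V_i · ∂²P_i/∂V_i∂δ_j = − V_j · ∂²P_i/∂V_j∂δ_i = ∂P_i/∂δ_j, all evaluated at (δ, V). -/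
namespace PF
variable {N : ℕ}

noncomputable def Amap (k : Fin N) : ((Fin N → ℝ) × (Fin N → ℝ)) →L[ℝ] ℝ :=
  (ContinuousLinearMap.proj k).comp (ContinuousLinearMap.fst ℝ (Fin N → ℝ) (Fin N → ℝ))

noncomputable def Mmap (k : Fin N) : ((Fin N → ℝ) × (Fin N → ℝ)) →L[ℝ] ℝ :=
  (ContinuousLinearMap.proj k).comp (ContinuousLinearMap.snd ℝ (Fin N → ℝ) (Fin N → ℝ))

@[simp] lemma Amap_apply (k : Fin N) (v : (Fin N → ℝ) × (Fin N → ℝ)) : Amap k v = v.1 k := rfl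
@[simp] lemma Mmap_apply (k : Fin N) (v : (Fin N → ℝ) × (Fin N → ℝ)) : Mmap k v = v.2 k := rfl

noncomputable def D1 (i : Fin N) (f g : Fin N → ℝ → ℝ) (x : (Fin N → ℝ) × (Fin N → ℝ)) :
    ((Fin N → ℝ) × (Fin N → ℝ)) →L[ℝ] ℝ :=
  x.2 i • (∑ k, (x.2 k • (g k (x.1 i - x.1 k) • (Amap i - Amap k)) +
      f k (x.1 i - x.1 k) • Mmap k)) +
    (∑ k, x.2 k * f k (x.1 i - x.1 k)) • Mmap i

lemma L1 (i : Fin N) (f g : Fin N → ℝ → ℝ) (hf : ∀ k s, HasDerivAt (f k) (g k s) s)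
    (x : (Fin N → ℝ) × (Fin N → ℝ)) :
    HasFDerivAt (fun x : (Fin N → ℝ) × (Fin N → ℝ) => x.2 i * ∑ k, x.2 k * f k (x.1 i - x.1 k))
      (D1 i f g x) x :=
  (Mmap i).hasFDerivAt.mul (HasFDerivAt.fun_sum fun k _ =>
    (Mmap k).hasFDerivAt.mul
      ((hf k (x.1 i - x.1 k)).comp_hasFDerivAt x
        ((Amap i).hasFDerivAt.sub (Amap k).hasFDerivAt)))

lemma D1_applyA (i j : Fin N) (f g : Fin N → ℝ → ℝ) (x : (Fin N → ℝ) × (Fin N → ℝ)) :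
    D1 i f g x (Pi.single j 1, 0) =
      x.2 i * ∑ k, x.2 k * g k (x.1 i - x.1 k) *
        ((if i = j then (1:ℝ) else 0) - if k = j then 1 else 0) := by
  simp only [D1, ContinuousLinearMap.add_apply, ContinuousLinearMap.smul_apply,
    ContinuousLinearMap.coe_sum', Finset.sum_apply, ContinuousLinearMap.sub_apply,
    Amap_apply, Mmap_apply, Pi.single_apply, smul_eq_mul]
  simp only [Pi.zero_apply, mul_zero, add_zero, zero_mul]
  rw [Finset.mul_sum, Finset.mul_sum]
  exact Finset.sum_congr rfl fun k _ => by ring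

lemma D1_applyM (i j : Fin N) (hij : i ≠ j) (f g : Fin N → ℝ → ℝ)
    (x : (Fin N → ℝ) × (Fin N → ℝ)) :
    D1 i f g x (0, Pi.single j 1) = x.2 i * f j (x.1 i - x.1 j) := by
  simp only [D1, ContinuousLinearMap.add_apply, ContinuousLinearMap.smul_apply,
    ContinuousLinearMap.coe_sum', Finset.sum_apply, ContinuousLinearMap.sub_apply,
    Amap_apply, Mmap_apply, Pi.single_apply, smul_eq_mul]
  simp [hij, sub_self, Finset.sum_ite_eq']

noncomputable def D2 (i j : Fin N) (f f' : ℝ → ℝ) (x : (Fin N → ℝ) × (Fin N → ℝ)) :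
    ((Fin N → ℝ) × (Fin N → ℝ)) →L[ℝ] ℝ :=
  x.2 i • (f' (x.1 i - x.1 j) • (Amap i - Amap j)) + f (x.1 i - x.1 j) • Mmap i

lemma L2 (i j : Fin N) (f f' : ℝ → ℝ) (hf : ∀ s, HasDerivAt f (f' s) s)
    (x : (Fin N → ℝ) × (Fin N → ℝ)) :
    HasFDerivAt (fun x : (Fin N → ℝ) × (Fin N → ℝ) => x.2 i * f (x.1 i - x.1 j))
      (D2 i j f f' x) x :=
  (Mmap i).hasFDerivAt.mul
    ((hf (x.1 i - x.1 j)).comp_hasFDerivAt x ((Amap i).hasFDerivAt.sub (Amap j).hasFDerivAt))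

lemma D2_applyMi (i j : Fin N) (f f' : ℝ → ℝ) (x : (Fin N → ℝ) × (Fin N → ℝ)) :
    D2 i j f f' x (0, Pi.single i 1) = f (x.1 i - x.1 j) := by
  simp [D2]

noncomputable def D3 (i j : Fin N) (f f' : ℝ → ℝ) (x : (Fin N → ℝ) × (Fin N → ℝ)) :
    ((Fin N → ℝ) × (Fin N → ℝ)) →L[ℝ] ℝ :=
  (x.2 i * x.2 j) • (f' (x.1 i - x.1 j) • (Amap i - Amap j)) +
    f (x.1 i - x.1 j) • (x.2 i • Mmap j + x.2 j • Mmap i)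

lemma L3 (i j : Fin N) (f f' : ℝ → ℝ) (hf : ∀ s, HasDerivAt f (f' s) s)
    (x : (Fin N → ℝ) × (Fin N → ℝ)) :
    HasFDerivAt (fun x : (Fin N → ℝ) × (Fin N → ℝ) => x.2 i * x.2 j * f (x.1 i - x.1 j))
      (D3 i j f f' x) x :=
  ((Mmap i).hasFDerivAt.mul (Mmap j).hasFDerivAt).mul
    ((hf (x.1 i - x.1 j)).comp_hasFDerivAt x ((Amap i).hasFDerivAt.sub (Amap j).hasFDerivAt))

lemma D3_applyAi (i j : Fin N) (hij : i ≠ j) (f f' : ℝ → ℝ)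
    (x : (Fin N → ℝ) × (Fin N → ℝ)) :
    D3 i j f f' x (Pi.single i 1, 0) = x.2 i * x.2 j * f' (x.1 i - x.1 j) := by
  simp [D3, Pi.single_apply, hij, Ne.symm hij]

lemma D3_applyMi (i j : Fin N) (hij : i ≠ j) (f f' : ℝ → ℝ)
    (x : (Fin N → ℝ) × (Fin N → ℝ)) :
    D3 i j f f' x (0, Pi.single i 1) = x.2 j * f (x.1 i - x.1 j) := by
  simp [D3, Pi.single_apply, hij, Ne.symm hij, mul_comm]

variable {G B : Fin N → Fin N → ℝ}

lemma hP (i : Fin N) : ∀ (k : Fin N) (s : ℝ),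
    HasDerivAt (fun s => G i k * Real.cos s + B i k * Real.sin s)
      (G i k * -Real.sin s + B i k * Real.cos s) s :=
  fun k s => ((Real.hasDerivAt_cos s).const_mul (G i k)).add
    ((Real.hasDerivAt_sin s).const_mul (B i k))

lemma hQ (i : Fin N) : ∀ (k : Fin N) (s : ℝ),
    HasDerivAt (fun s => G i k * Real.sin s - B i k * Real.cos s)
      (G i k * Real.cos s - B i k * -Real.sin s) s :=
  fun k s => ((Real.hasDerivAt_sin s).const_mul (G i k)).sub
    ((Real.hasDerivAt_cos s).const_mul (B i k))

lemma pdA_Pinj (i j : Fin N) (hij : i ≠ j) :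
    pdA N j (Pinj N G B i) = fun x => x.2 i * x.2 j *
      (G i j * Real.sin (x.1 i - x.1 j) - B i j * Real.cos (x.1 i - x.1 j)) := by
  funext x
  have h1 : fderiv ℝ (Pinj N G B i) x =
      D1 i (fun k s => G i k * Real.cos s + B i k * Real.sin s)
        (fun k s => G i k * -Real.sin s + B i k * Real.cos s) x :=
    (L1 i _ _ (hP i) x).fderiv
  show fderiv ℝ (Pinj N G B i) x (Pi.single j 1, 0) = _
  rw [h1, D1_applyA, if_neg hij]
  rw [Finset.sum_eq_single j (fun k _ hk => by simp [hk]) (by simp)]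
  simp
  ring

lemma pdA_Qinj (i j : Fin N) (hij : i ≠ j) :
    pdA N j (Qinj N G B i) = fun x => x.2 i * x.2 j *
      (-(G i j * Real.cos (x.1 i - x.1 j)) - B i j * Real.sin (x.1 i - x.1 j)) := by
  funext x
  have h1 : fderiv ℝ (Qinj N G B i) x =
      D1 i (fun k s => G i k * Real.sin s - B i k * Real.cos s)
        (fun k s => G i k * Real.cos s - B i k * -Real.sin s) x :=
    (L1 i _ _ (hQ i) x).fderiv
  show fderiv ℝ (Qinj N G B i) x (Pi.single j 1, 0) = _
  rw [h1, D1_applyA, if_neg hij]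
  rw [Finset.sum_eq_single j (fun k _ hk => by simp [hk]) (by simp)]
  simp
  ring

lemma pdM_Qinj (i j : Fin N) (hij : i ≠ j) :
    pdM N j (Qinj N G B i) = fun x => x.2 i *
      (G i j * Real.sin (x.1 i - x.1 j) - B i j * Real.cos (x.1 i - x.1 j)) := by
  funext x
  have h1 : fderiv ℝ (Qinj N G B i) x =
      D1 i (fun k s => G i k * Real.sin s - B i k * Real.cos s)
        (fun k s => G i k * Real.cos s - B i k * -Real.sin s) x :=
    (L1 i _ _ (hQ i) x).fderiv
  show fderiv ℝ (Qinj N G B i) x (0, Pi.single j 1) = _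
  rw [h1, D1_applyM i j hij]

lemma pdA_Pinj_i (i : Fin N) :
    pdA N i (Pinj N G B i) = fun x => x.2 i * ∑ k, x.2 k *
      ((G i k * -Real.sin (x.1 i - x.1 k) + B i k * Real.cos (x.1 i - x.1 k)) *
        ((1:ℝ) - if k = i then 1 else 0)) := by
  funext x
  have h1 : fderiv ℝ (Pinj N G B i) x =
      D1 i (fun k s => G i k * Real.cos s + B i k * Real.sin s)
        (fun k s => G i k * -Real.sin s + B i k * Real.cos s) x :=
    (L1 i _ _ (hP i) x).fderiv
  show fderiv ℝ (Pinj N G B i) x (Pi.single i 1, 0) = _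
  rw [h1, D1_applyA, if_pos rfl]
  congr 1
  exact Finset.sum_congr rfl fun k _ => by ring

end PF
open PF

/-- For `i ≠ j`, the mixed second-order partial derivatives of the reactive power all
equal `∂P_i/∂δ_j`:
`V_i V_j ∂²Q_i/∂V_i∂V_j = ∂²Q_i/∂δ_i∂δ_j = V_i ∂²P_i/∂V_i∂δ_j = −V_j ∂²P_i/∂V_j∂δ_i
 = ∂P_i/∂δ_j`. -/
theorem stmt9 (N : ℕ) (hN : 1 ≤ N) (G B : Fin N → Fin N → ℝ)
    (i j : Fin N) (hij : i ≠ j) (δ V : Fin N → ℝ) :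
    V i * V j * pdM N i (pdM N j (Qinj N G B i)) (δ, V) =
        pdA N j (Pinj N G B i) (δ, V) ∧
    pdA N i (pdA N j (Qinj N G B i)) (δ, V) = pdA N j (Pinj N G B i) (δ, V) ∧
    V i * pdM N i (pdA N j (Pinj N G B i)) (δ, V) = pdA N j (Pinj N G B i) (δ, V) ∧
    -(V j) * pdM N j (pdA N i (Pinj N G B i)) (δ, V) =
        pdA N j (Pinj N G B i) (δ, V) := by
  have hR : pdA N j (Pinj N G B i) (δ, V) =
      V i * V j * (G i j * Real.sin (δ i - δ j) - B i j * Real.cos (δ i - δ j)) := by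
    rw [pdA_Pinj i j hij]
  refine ⟨?_, ?_, ?_, ?_⟩
  · -- part 1
    rw [pdM_Qinj i j hij, hR]
    have h2 : fderiv ℝ (fun x : (Fin N → ℝ) × (Fin N → ℝ) => x.2 i *
        (G i j * Real.sin (x.1 i - x.1 j) - B i j * Real.cos (x.1 i - x.1 j))) (δ, V) =
        D2 i j (fun s => G i j * Real.sin s - B i j * Real.cos s)
          (fun s => G i j * Real.cos s - B i j * -Real.sin s) (δ, V) :=
      (L2 i j _ _ (fun s => ((Real.hasDerivAt_sin s).const_mul (G i j)).sub
        ((Real.hasDerivAt_cos s).const_mul (B i j))) (δ, V)).fderiv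
    show V i * V j * (fderiv ℝ _ (δ, V)) (0, Pi.single i 1) = _
    rw [h2, D2_applyMi]
  · -- part 2
    rw [pdA_Qinj i j hij, hR]
    have h2 : fderiv ℝ (fun x : (Fin N → ℝ) × (Fin N → ℝ) => x.2 i * x.2 j *
        (-(G i j * Real.cos (x.1 i - x.1 j)) - B i j * Real.sin (x.1 i - x.1 j))) (δ, V) =
        D3 i j (fun s => -(G i j * Real.cos s) - B i j * Real.sin s)
          (fun s => -(G i j * -Real.sin s) - B i j * Real.cos s) (δ, V) :=
      (L3 i j _ _ (fun s => (((Real.hasDerivAt_cos s).const_mul (G i j)).neg).sub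
        ((Real.hasDerivAt_sin s).const_mul (B i j))) (δ, V)).fderiv
    show (fderiv ℝ _ (δ, V)) (Pi.single i 1, 0) = _
    rw [h2, D3_applyAi i j hij]
    ring
  · -- part 3
    rw [pdA_Pinj i j hij]
    have h2 : fderiv ℝ (fun x : (Fin N → ℝ) × (Fin N → ℝ) => x.2 i * x.2 j *
        (G i j * Real.sin (x.1 i - x.1 j) - B i j * Real.cos (x.1 i - x.1 j))) (δ, V) =
        D3 i j (fun s => G i j * Real.sin s - B i j * Real.cos s)
          (fun s => G i j * Real.cos s - B i j * -Real.sin s) (δ, V) :=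
      (L3 i j _ _ (fun s => ((Real.hasDerivAt_sin s).const_mul (G i j)).sub
        ((Real.hasDerivAt_cos s).const_mul (B i j))) (δ, V)).fderiv
    show V i * (fderiv ℝ _ (δ, V)) (0, Pi.single i 1) =
      V i * V j * (G i j * Real.sin (δ i - δ j) - B i j * Real.cos (δ i - δ j))
    rw [h2, D3_applyMi i j hij]
    ring
  · -- part 4
    rw [pdA_Pinj_i i, hR]
    have h2 : fderiv ℝ (fun x : (Fin N → ℝ) × (Fin N → ℝ) => x.2 i * ∑ k, x.2 k *
        ((G i k * -Real.sin (x.1 i - x.1 k) + B i k * Real.cos (x.1 i - x.1 k)) *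
          ((1:ℝ) - if k = i then 1 else 0))) (δ, V) =
        D1 i (fun k s => (G i k * -Real.sin s + B i k * Real.cos s) *
            ((1:ℝ) - if k = i then 1 else 0))
          (fun k s => (G i k * -Real.cos s + B i k * -Real.sin s) *
            ((1:ℝ) - if k = i then 1 else 0)) (δ, V) :=
      (L1 i _ _ (fun k s => ((((Real.hasDerivAt_sin s).neg.const_mul (G i k)).add
        ((Real.hasDerivAt_cos s).const_mul (B i k))).mul_const _)) (δ, V)).fderiv
    show -(V j) * (fderiv ℝ _ (δ, V)) (0, Pi.single j 1) = _
    rw [h2, D1_applyM i j hij]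
    rw [if_neg (Ne.symm hij)]
    ring
end

section
/- For every index i and every point (δ, V) ∈ ℝ^N × ℝ^N, the diagonal second-order partial derivatives of the active power satisfy: P_i(δ,V) − (V_i²/2) · ∂²P_i/∂V_i² (δ,V) = − ∂²P_i/∂δ_i² (δ,V) = V_i · ∂²Q_i/∂V_i∂δ_i (δ,V) = ∂Q_i/∂δ_i (δ,V). -/
noncomputable def sA (N : ℕ) (k : Fin N) : ((Fin N → ℝ) × (Fin N → ℝ)) →L[ℝ] ℝ :=
  (ContinuousLinearMap.proj k).comp (ContinuousLinearMap.fst ℝ (Fin N → ℝ) (Fin N → ℝ))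

noncomputable def sM (N : ℕ) (k : Fin N) : ((Fin N → ℝ) × (Fin N → ℝ)) →L[ℝ] ℝ :=
  (ContinuousLinearMap.proj k).comp (ContinuousLinearMap.snd ℝ (Fin N → ℝ) (Fin N → ℝ))

@[simp] lemma sA_apply (N : ℕ) (k : Fin N) (v : (Fin N → ℝ) × (Fin N → ℝ)) :
    sA N k v = v.1 k := rfl

@[simp] lemma sM_apply (N : ℕ) (k : Fin N) (v : (Fin N → ℝ) × (Fin N → ℝ)) :
    sM N k v = v.2 k := rfl

lemma masterHas {N : ℕ} (i : Fin N) (φ φ' : Fin N → ℝ → ℝ)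
    (hφ : ∀ j s, HasDerivAt (φ j) (φ' j s) s) (x : (Fin N → ℝ) × (Fin N → ℝ)) :
    HasFDerivAt (fun x => x.2 i * ∑ j, x.2 j * φ j (x.1 i - x.1 j))
      (x.2 i • (∑ j, (x.2 j • (φ' j (x.1 i - x.1 j) • (sA N i - sA N j))
          + φ j (x.1 i - x.1 j) • sM N j))
        + (∑ j, x.2 j * φ j (x.1 i - x.1 j)) • sM N i) x := by
  have h1 : ∀ j : Fin N, HasFDerivAt (fun x : (Fin N → ℝ) × (Fin N → ℝ) => φ j (x.1 i - x.1 j))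
      (φ' j (x.1 i - x.1 j) • (sA N i - sA N j)) x :=
    fun j => (hφ j _).comp_hasFDerivAt x (((sA N i).hasFDerivAt).sub ((sA N j).hasFDerivAt))
  have h2 : HasFDerivAt (fun x : (Fin N → ℝ) × (Fin N → ℝ) => ∑ j, x.2 j * φ j (x.1 i - x.1 j))
      (∑ j, (x.2 j • (φ' j (x.1 i - x.1 j) • (sA N i - sA N j)) + φ j (x.1 i - x.1 j) • sM N j)) x :=
    HasFDerivAt.fun_sum fun j _ => ((sM N j).hasFDerivAt).mul (h1 j)
  exact ((sM N i).hasFDerivAt).mul h2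

lemma master_pdA {N : ℕ} (i : Fin N) (φ φ' : Fin N → ℝ → ℝ)
    (hφ : ∀ j s, HasDerivAt (φ j) (φ' j s) s) (x : (Fin N → ℝ) × (Fin N → ℝ)) :
    fderiv ℝ (fun x => x.2 i * ∑ j, x.2 j * φ j (x.1 i - x.1 j)) x (Pi.single i 1, 0)
      = x.2 i * ∑ j, x.2 j * (if j = i then 0 else φ' j (x.1 i - x.1 j)) := by
  rw [(masterHas i φ φ' hφ x).fderiv]
  simp [ContinuousLinearMap.sum_apply, Pi.single_apply]
  exact Or.inl (Finset.sum_congr rfl fun j _ => by by_cases h : j = i <;> simp [h])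

lemma master_pdM {N : ℕ} (i : Fin N) (φ φ' : Fin N → ℝ → ℝ)
    (hφ : ∀ j s, HasDerivAt (φ j) (φ' j s) s) (x : (Fin N → ℝ) × (Fin N → ℝ)) :
    fderiv ℝ (fun x => x.2 i * ∑ j, x.2 j * φ j (x.1 i - x.1 j)) x (0, Pi.single i 1)
      = x.2 i * φ i (x.1 i - x.1 i) + ∑ j, x.2 j * φ j (x.1 i - x.1 j) := by
  rw [(masterHas i φ φ' hφ x).fderiv]
  simp [ContinuousLinearMap.sum_apply, Pi.single_apply, Finset.sum_ite_eq']

lemma master_pdM2 {N : ℕ} (i : Fin N) (φ φ' : Fin N → ℝ → ℝ)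
    (hφ : ∀ j s, HasDerivAt (φ j) (φ' j s) s) (x : (Fin N → ℝ) × (Fin N → ℝ)) :
    fderiv ℝ (fun x => x.2 i * φ i (x.1 i - x.1 i) + ∑ j, x.2 j * φ j (x.1 i - x.1 j)) x
      (0, Pi.single i 1) = φ i (x.1 i - x.1 i) + φ i (x.1 i - x.1 i) := by
  have h1 : ∀ j : Fin N, ∀ k : Fin N,
      HasFDerivAt (fun x : (Fin N → ℝ) × (Fin N → ℝ) => φ j (x.1 i - x.1 k))
      (φ' j (x.1 i - x.1 k) • (sA N i - sA N k)) x :=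
    fun j k => (hφ j _).comp_hasFDerivAt x (((sA N i).hasFDerivAt).sub ((sA N k).hasFDerivAt))
  have H : HasFDerivAt (fun x : (Fin N → ℝ) × (Fin N → ℝ) =>
      x.2 i * φ i (x.1 i - x.1 i) + ∑ j, x.2 j * φ j (x.1 i - x.1 j))
      ((x.2 i • (φ' i (x.1 i - x.1 i) • (sA N i - sA N i)) + φ i (x.1 i - x.1 i) • sM N i)
        + ∑ j, (x.2 j • (φ' j (x.1 i - x.1 j) • (sA N i - sA N j)) + φ j (x.1 i - x.1 j) • sM N j)) x :=
    (((sM N i).hasFDerivAt).mul (h1 i i)).add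
      (HasFDerivAt.fun_sum fun j _ => ((sM N j).hasFDerivAt).mul (h1 j j))
  rw [H.fderiv]
  simp [ContinuousLinearMap.sum_apply, Pi.single_apply, Finset.sum_ite_eq']

/-- Diagonal second-order partial derivatives of the active power:
`P_i − (V_i²/2) ∂²P_i/∂V_i² = −∂²P_i/∂δ_i² = V_i ∂²Q_i/∂V_i∂δ_i = ∂Q_i/∂δ_i`. -/
theorem stmt10 (N : ℕ) (hN : 1 ≤ N) (G B : Fin N → Fin N → ℝ)
    (i : Fin N) (δ V : Fin N → ℝ) :
    Pinj N G B i (δ, V) - (V i ^ 2 / 2) * pdM N i (pdM N i (Pinj N G B i)) (δ, V) =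
        pdA N i (Qinj N G B i) (δ, V) ∧
    -(pdA N i (pdA N i (Pinj N G B i)) (δ, V)) = pdA N i (Qinj N G B i) (δ, V) ∧
    V i * pdM N i (pdA N i (Qinj N G B i)) (δ, V) = pdA N i (Qinj N G B i) (δ, V) := by
  -- derivative data
  have hP : ∀ j s, HasDerivAt (fun s => G i j * Real.cos s + B i j * Real.sin s)
      (G i j * -Real.sin s + B i j * Real.cos s) s := fun j s =>
    ((Real.hasDerivAt_cos s).const_mul (G i j)).add ((Real.hasDerivAt_sin s).const_mul (B i j))
  have hQ : ∀ j s, HasDerivAt (fun s => G i j * Real.sin s - B i j * Real.cos s)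
      (G i j * Real.cos s - B i j * -Real.sin s) s := fun j s =>
    ((Real.hasDerivAt_sin s).const_mul (G i j)).sub ((Real.hasDerivAt_cos s).const_mul (B i j))
  have hPA : ∀ j s, HasDerivAt
      (fun s => if j = i then (0:ℝ) else G i j * -Real.sin s + B i j * Real.cos s)
      (if j = i then (0:ℝ) else G i j * -Real.cos s + B i j * -Real.sin s) s := by
    intro j s
    by_cases h : j = i
    · simpa [h] using hasDerivAt_const s (0:ℝ)
    · simpa [h] using (((Real.hasDerivAt_sin s).neg.const_mul (G i j)).fun_add
        (((Real.hasDerivAt_cos s)).const_mul (B i j)))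
  have hQA : ∀ j s, HasDerivAt
      (fun s => if j = i then (0:ℝ) else G i j * Real.cos s - B i j * -Real.sin s)
      (if j = i then (0:ℝ) else G i j * -Real.sin s - B i j * -Real.cos s) s := by
    intro j s
    by_cases h : j = i
    · simpa [h] using hasDerivAt_const s (0:ℝ)
    · simpa [h] using (((Real.hasDerivAt_cos s).const_mul (G i j)).fun_sub
        (((Real.hasDerivAt_sin s)).neg.const_mul (B i j)))
  -- the key closed forms
  have hQd : ∀ x : (Fin N → ℝ) × (Fin N → ℝ), pdA N i (Qinj N G B i) x =
      x.2 i * ∑ j, x.2 j * (if j = i then (0:ℝ)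
        else G i j * Real.cos (x.1 i - x.1 j) - B i j * -Real.sin (x.1 i - x.1 j)) :=
    fun x => master_pdA i _ _ hQ x
  have hPd : ∀ x : (Fin N → ℝ) × (Fin N → ℝ), pdA N i (Pinj N G B i) x =
      x.2 i * ∑ j, x.2 j * (if j = i then (0:ℝ)
        else G i j * -Real.sin (x.1 i - x.1 j) + B i j * Real.cos (x.1 i - x.1 j)) :=
    fun x => master_pdA i _ _ hP x
  have hPm : ∀ x : (Fin N → ℝ) × (Fin N → ℝ), pdM N i (Pinj N G B i) x =
      x.2 i * (G i i * Real.cos (x.1 i - x.1 i) + B i i * Real.sin (x.1 i - x.1 i))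
        + ∑ j, x.2 j * (G i j * Real.cos (x.1 i - x.1 j) + B i j * Real.sin (x.1 i - x.1 j)) :=
    fun x => master_pdM i _ _ hP x
  -- second derivatives at the point
  have hPmm : pdM N i (pdM N i (Pinj N G B i)) (δ, V) =
      (G i i * Real.cos (δ i - δ i) + B i i * Real.sin (δ i - δ i))
        + (G i i * Real.cos (δ i - δ i) + B i i * Real.sin (δ i - δ i)) := by
    have : pdM N i (Pinj N G B i) = fun x => x.2 i *
        (G i i * Real.cos (x.1 i - x.1 i) + B i i * Real.sin (x.1 i - x.1 i))
        + ∑ j, x.2 j * (G i j * Real.cos (x.1 i - x.1 j) + B i j * Real.sin (x.1 i - x.1 j)) :=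
      funext hPm
    rw [pdM, this]
    exact master_pdM2 i _ _ hP (δ, V)
  have hPaa : pdA N i (pdA N i (Pinj N G B i)) (δ, V) =
      V i * ∑ j, V j * (if j = i then (0:ℝ) else if j = i then (0:ℝ)
        else G i j * -Real.cos (δ i - δ j) + B i j * -Real.sin (δ i - δ j)) := by
    have : pdA N i (Pinj N G B i) = fun x => x.2 i * ∑ j, x.2 j *
        ((fun j s => if j = i then (0:ℝ) else G i j * -Real.sin s + B i j * Real.cos s) j
          (x.1 i - x.1 j)) := funext hPd
    rw [pdA, this]
    exact master_pdA i _ _ hPA (δ, V)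
  have hQam : pdM N i (pdA N i (Qinj N G B i)) (δ, V) =
      V i * (if i = i then (0:ℝ)
        else G i i * Real.cos (δ i - δ i) - B i i * -Real.sin (δ i - δ i))
      + ∑ j, V j * (if j = i then (0:ℝ)
        else G i j * Real.cos (δ i - δ j) - B i j * -Real.sin (δ i - δ j)) := by
    have : pdA N i (Qinj N G B i) = fun x => x.2 i * ∑ j, x.2 j *
        ((fun j s => if j = i then (0:ℝ) else G i j * Real.cos s - B i j * -Real.sin s) j
          (x.1 i - x.1 j)) := funext hQd
    rw [pdM, this]
    exact master_pdM i _ _ hQA (δ, V)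
  -- a sum bookkeeping lemma
  have key : ∀ f : Fin N → ℝ, (∑ j, f j) = (∑ j, if j = i then 0 else f j) + f i := by
    intro f
    have h2 : (∑ j, if j = i then 0 else f j) = ∑ j ∈ Finset.univ.erase i, f j := by
      rw [← Finset.sum_erase (f := fun j => if j = i then (0:ℝ) else f j) (a := i)
        Finset.univ (by simp)]
      exact Finset.sum_congr rfl fun j hj => by simp [Finset.ne_of_mem_erase hj]
    rw [h2, ← Finset.add_sum_erase _ f (Finset.mem_univ i), add_comm]
  refine ⟨?_, ?_, ?_⟩
  · rw [hPmm, hQd (δ, V)]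
    simp only [Pinj]
    rw [key (fun j => V j * (G i j * Real.cos (δ i - δ j) + B i j * Real.sin (δ i - δ j)))]
    simp only [sub_self, Real.cos_zero, Real.sin_zero]
    have hs : (∑ j, if j = i then (0:ℝ) else
          V j * (G i j * Real.cos (δ i - δ j) + B i j * Real.sin (δ i - δ j)))
        = ∑ j, V j * (if j = i then (0:ℝ)
          else G i j * Real.cos (δ i - δ j) - B i j * -Real.sin (δ i - δ j)) := by
      refine Finset.sum_congr rfl fun j _ => ?_
      by_cases h : j = i <;> simp [h] <;> ring
    rw [hs]; ring
  · rw [hPaa, hQd (δ, V)]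
    rw [neg_mul_eq_mul_neg, ← Finset.sum_neg_distrib]
    congr 1
    refine Finset.sum_congr rfl fun j _ => ?_
    by_cases h : j = i <;> simp [h] <;> ring
  · rw [hQam, hQd (δ, V)]
    simp
end

section
/- For every index i and every point (δ, V) ∈ ℝ^N × ℝ^N, the diagonal second-order partial derivatives of the reactive power satisfy: (V_i²/2) · ∂²Q_i/∂V_i² (δ,V) − Q_i(δ,V) = ∂²Q_i/∂δ_i² (δ,V) = V_i · ∂²P_i/∂V_i∂δ_i (δ,V) = ∂P_i/∂δ_i (δ,V). -/
noncomputable def C1 (N : ℕ) (k : Fin N) : ((Fin N → ℝ) × (Fin N → ℝ)) →L[ℝ] ℝ :=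
  (ContinuousLinearMap.proj k).comp (ContinuousLinearMap.fst ℝ (Fin N → ℝ) (Fin N → ℝ))

noncomputable def C2 (N : ℕ) (k : Fin N) : ((Fin N → ℝ) × (Fin N → ℝ)) →L[ℝ] ℝ :=
  (ContinuousLinearMap.proj k).comp (ContinuousLinearMap.snd ℝ (Fin N → ℝ) (Fin N → ℝ))

lemma C1_hasFDerivAt {N : ℕ} (k : Fin N) (x : (Fin N → ℝ) × (Fin N → ℝ)) :
    HasFDerivAt (fun x : (Fin N → ℝ) × (Fin N → ℝ) => x.1 k) (C1 N k) x :=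
  (C1 N k).hasFDerivAt

lemma C2_hasFDerivAt {N : ℕ} (k : Fin N) (x : (Fin N → ℝ) × (Fin N → ℝ)) :
    HasFDerivAt (fun x : (Fin N → ℝ) × (Fin N → ℝ) => x.2 k) (C2 N k) x :=
  (C2 N k).hasFDerivAt

noncomputable def Ssum (N : ℕ) (i : Fin N) (a b : Fin N → ℝ) :
    (Fin N → ℝ) × (Fin N → ℝ) → ℝ :=
  fun x => ∑ j, x.2 j * (a j * Real.sin (x.1 i - x.1 j) + b j * Real.cos (x.1 i - x.1 j))

noncomputable def DSsum (N : ℕ) (i : Fin N) (a b : Fin N → ℝ)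
    (x : (Fin N → ℝ) × (Fin N → ℝ)) : ((Fin N → ℝ) × (Fin N → ℝ)) →L[ℝ] ℝ :=
  ∑ j, ((x.2 j * (a j * Real.cos (x.1 i - x.1 j) - b j * Real.sin (x.1 i - x.1 j))) • (C1 N i - C1 N j)
    + (a j * Real.sin (x.1 i - x.1 j) + b j * Real.cos (x.1 i - x.1 j)) • C2 N j)

lemma Ssum_hasFDerivAt {N : ℕ} (i : Fin N) (a b : Fin N → ℝ)
    (x : (Fin N → ℝ) × (Fin N → ℝ)) :
    HasFDerivAt (Ssum N i a b) (DSsum N i a b x) x := by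
  unfold Ssum DSsum
  refine HasFDerivAt.fun_sum fun j _ => ?_
  have hl : HasFDerivAt (fun x : (Fin N → ℝ) × (Fin N → ℝ) => x.1 i - x.1 j)
      (C1 N i - C1 N j) x := (C1_hasFDerivAt i x).sub (C1_hasFDerivAt j x)
  have hsin := (Real.hasDerivAt_sin (x.1 i - x.1 j)).comp_hasFDerivAt x hl
  have hcos := (Real.hasDerivAt_cos (x.1 i - x.1 j)).comp_hasFDerivAt x hl
  have hT := (hsin.const_mul (a j)).fun_add (hcos.const_mul (b j))
  have h := (C2_hasFDerivAt j x).fun_mul hT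
  refine h.congr_fderiv ?_
  refine ContinuousLinearMap.ext fun v => ?_
  simp [C1, C2, smul_smul]
  ring

lemma DSsum_applyA {N : ℕ} (i : Fin N) (a b : Fin N → ℝ)
    (x : (Fin N → ℝ) × (Fin N → ℝ)) :
    (DSsum N i a b x) ((Pi.single i 1 : Fin N → ℝ), (0 : Fin N → ℝ)) =
      Ssum N i (fun j => -b j) a x - x.2 i * a i := by
  unfold DSsum Ssum
  simp only [ContinuousLinearMap.coe_sum', Finset.sum_apply,
    ContinuousLinearMap.add_apply, ContinuousLinearMap.smul_apply,
    ContinuousLinearMap.sub_apply, C1, C2, ContinuousLinearMap.coe_comp',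
    Function.comp_apply, ContinuousLinearMap.coe_fst',
    ContinuousLinearMap.coe_snd', ContinuousLinearMap.proj_apply,
    Pi.zero_apply, smul_eq_mul, mul_zero, add_zero, Pi.single_eq_same]
  have key : ∀ j : Fin N,
      x.2 j * (a j * Real.cos (x.1 i - x.1 j) - b j * Real.sin (x.1 i - x.1 j)) *
        (1 - (Pi.single i 1 : Fin N → ℝ) j)
      = x.2 j * (-b j * Real.sin (x.1 i - x.1 j) + a j * Real.cos (x.1 i - x.1 j))
        - (if j = i then x.2 i * a i else 0) := by
    intro j
    rcases eq_or_ne j i with rfl | hj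
    · simp only [Pi.single_eq_same, sub_self, Real.sin_zero, Real.cos_zero, if_pos rfl,
        mul_zero, zero_mul, mul_one, if_true, eq_self_iff_true]
      ring
    · simp only [Pi.single_apply, if_neg hj]
      ring
  rw [Finset.sum_congr rfl fun j _ => key j, Finset.sum_sub_distrib,
    Finset.sum_ite_eq' Finset.univ i]
  simp

lemma DSsum_applyM {N : ℕ} (i : Fin N) (a b : Fin N → ℝ)
    (x : (Fin N → ℝ) × (Fin N → ℝ)) :
    (DSsum N i a b x) ((0 : Fin N → ℝ), (Pi.single i 1 : Fin N → ℝ)) = b i := by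
  unfold DSsum
  simp only [ContinuousLinearMap.coe_sum', Finset.sum_apply,
    ContinuousLinearMap.add_apply, ContinuousLinearMap.smul_apply,
    ContinuousLinearMap.sub_apply, C1, C2, ContinuousLinearMap.coe_comp',
    Function.comp_apply, ContinuousLinearMap.coe_fst',
    ContinuousLinearMap.coe_snd', ContinuousLinearMap.proj_apply,
    Pi.zero_apply, smul_eq_mul, mul_zero, sub_zero, zero_add, sub_self]
  simp [Pi.single_apply, mul_ite]

lemma mulS_hasFDerivAt {N : ℕ} (i : Fin N) (a b : Fin N → ℝ)
    (x : (Fin N → ℝ) × (Fin N → ℝ)) :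
    HasFDerivAt (fun x => x.2 i * Ssum N i a b x)
      (x.2 i • DSsum N i a b x + Ssum N i a b x • C2 N i) x :=
  (C2_hasFDerivAt i x).mul (Ssum_hasFDerivAt i a b x)

lemma C2_applyA {N : ℕ} (k i : Fin N) :
    C2 N k ((Pi.single i 1 : Fin N → ℝ), (0 : Fin N → ℝ)) = 0 := by
  simp [C2]

lemma C2_applyM {N : ℕ} (i : Fin N) :
    C2 N i ((0 : Fin N → ℝ), (Pi.single i 1 : Fin N → ℝ)) = 1 := by
  simp [C2]

lemma pdA_mulS {N : ℕ} (i : Fin N) (a b : Fin N → ℝ) :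
    pdA N i (fun x => x.2 i * Ssum N i a b x) =
      fun x => x.2 i * Ssum N i (fun j => -b j) a x - x.2 i ^ 2 * a i := by
  funext x
  unfold pdA
  rw [(mulS_hasFDerivAt i a b x).fderiv]
  simp only [ContinuousLinearMap.add_apply, ContinuousLinearMap.smul_apply,
    smul_eq_mul, DSsum_applyA, C2_applyA, mul_zero, add_zero]
  ring

lemma pdM_mulS {N : ℕ} (i : Fin N) (a b : Fin N → ℝ) :
    pdM N i (fun x => x.2 i * Ssum N i a b x) =
      fun x => x.2 i * b i + Ssum N i a b x := by
  funext x
  unfold pdM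
  rw [(mulS_hasFDerivAt i a b x).fderiv]
  simp only [ContinuousLinearMap.add_apply, ContinuousLinearMap.smul_apply,
    smul_eq_mul, DSsum_applyM, C2_applyM, mul_one]

lemma Qinj_eq {N : ℕ} (G B : Fin N → Fin N → ℝ) (i : Fin N) :
    Qinj N G B i = fun x => x.2 i * Ssum N i (fun j => G i j) (fun j => -(B i j)) x := by
  funext x
  unfold Qinj Ssum
  congr 1
  exact Finset.sum_congr rfl fun j _ => by ring

lemma Pinj_eq {N : ℕ} (G B : Fin N → Fin N → ℝ) (i : Fin N) :
    Pinj N G B i = fun x => x.2 i * Ssum N i (fun j => B i j) (fun j => G i j) x := by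
  funext x
  unfold Pinj Ssum
  congr 1
  exact Finset.sum_congr rfl fun j _ => by ring

lemma Ssum_neg {N : ℕ} (G B : Fin N → Fin N → ℝ) (i : Fin N)
    (x : (Fin N → ℝ) × (Fin N → ℝ)) :
    Ssum N i (fun j => -(G i j)) (fun j => B i j) x =
      - Ssum N i (fun j => G i j) (fun j => -(B i j)) x := by
  unfold Ssum
  rw [← Finset.sum_neg_distrib]
  exact Finset.sum_congr rfl fun j _ => by ring

lemma pd_sub_sq_A {N : ℕ} (i : Fin N) (c : ℝ) (F : (Fin N → ℝ) × (Fin N → ℝ) → ℝ)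
    (L : ((Fin N → ℝ) × (Fin N → ℝ)) →L[ℝ] ℝ) (x : (Fin N → ℝ) × (Fin N → ℝ))
    (hF : HasFDerivAt F L x) :
    fderiv ℝ (fun y => F y - y.2 i ^ 2 * c) x ((Pi.single i 1 : Fin N → ℝ), (0 : Fin N → ℝ))
      = L (Pi.single i 1, 0) := by
  have heq : (fun y : (Fin N → ℝ) × (Fin N → ℝ) => y.2 i ^ 2 * c) =
      fun y => y.2 i * y.2 i * c := by funext y; ring
  have hsq := ((C2_hasFDerivAt i x).fun_mul (C2_hasFDerivAt i x)).mul_const c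
  rw [← heq] at hsq
  rw [(hF.fun_sub hsq).fderiv]
  simp [C2_applyA]

lemma pd_sub_sq_M {N : ℕ} (i : Fin N) (c : ℝ) (F : (Fin N → ℝ) × (Fin N → ℝ) → ℝ)
    (L : ((Fin N → ℝ) × (Fin N → ℝ)) →L[ℝ] ℝ) (x : (Fin N → ℝ) × (Fin N → ℝ))
    (hF : HasFDerivAt F L x) :
    fderiv ℝ (fun y => F y - y.2 i ^ 2 * c) x ((0 : Fin N → ℝ), (Pi.single i 1 : Fin N → ℝ))
      = L (0, Pi.single i 1) - 2 * x.2 i * c := by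
  have heq : (fun y : (Fin N → ℝ) × (Fin N → ℝ) => y.2 i ^ 2 * c) =
      fun y => y.2 i * y.2 i * c := by funext y; ring
  have hsq := ((C2_hasFDerivAt i x).fun_mul (C2_hasFDerivAt i x)).mul_const c
  rw [← heq] at hsq
  rw [(hF.fun_sub hsq).fderiv]
  simp [C2_applyM]
  ring

lemma pdA_Qinj {N : ℕ} (G B : Fin N → Fin N → ℝ) (i : Fin N) :
    pdA N i (Qinj N G B i) = fun x => Pinj N G B i x - x.2 i ^ 2 * G i i := by
  rw [Qinj_eq, pdA_mulS, Pinj_eq]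
  funext x
  simp only [neg_neg]

lemma pdA_Pinj {N : ℕ} (G B : Fin N → Fin N → ℝ) (i : Fin N) :
    pdA N i (Pinj N G B i) = fun x => -(Qinj N G B i x) - x.2 i ^ 2 * B i i := by
  rw [Pinj_eq, pdA_mulS, Qinj_eq]
  funext x
  rw [Ssum_neg]
  ring

/-- Diagonal second-order partial derivatives of the reactive power:
`(V_i²/2) ∂²Q_i/∂V_i² − Q_i = ∂²Q_i/∂δ_i² = V_i ∂²P_i/∂V_i∂δ_i = ∂P_i/∂δ_i`. -/
theorem stmt11 (N : ℕ) (hN : 1 ≤ N) (G B : Fin N → Fin N → ℝ)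
    (i : Fin N) (δ V : Fin N → ℝ) :
    (V i ^ 2 / 2) * pdM N i (pdM N i (Qinj N G B i)) (δ, V) - Qinj N G B i (δ, V) =
        pdA N i (Pinj N G B i) (δ, V) ∧
    pdA N i (pdA N i (Qinj N G B i)) (δ, V) = pdA N i (Pinj N G B i) (δ, V) ∧
    V i * pdM N i (pdA N i (Pinj N G B i)) (δ, V) = pdA N i (Pinj N G B i) (δ, V) := by
  have hP : HasFDerivAt (Pinj N G B i)
      ((δ, V).2 i • DSsum N i (fun j => B i j) (fun j => G i j) (δ, V)
        + Ssum N i (fun j => B i j) (fun j => G i j) (δ, V) • C2 N i) (δ, V) := by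
    rw [Pinj_eq]; exact mulS_hasFDerivAt i _ _ (δ, V)
  have hQ : HasFDerivAt (Qinj N G B i)
      ((δ, V).2 i • DSsum N i (fun j => G i j) (fun j => -(B i j)) (δ, V)
        + Ssum N i (fun j => G i j) (fun j => -(B i j)) (δ, V) • C2 N i) (δ, V) := by
    rw [Qinj_eq]; exact mulS_hasFDerivAt i _ _ (δ, V)
  refine ⟨?_, ?_, ?_⟩
  · -- (V i^2/2) * pdM pdM Q - Q = pdA P
    have hC : pdM N i (Qinj N G B i) =
        fun x => x.2 i * (-(B i i)) + Ssum N i (fun j => G i j) (fun j => -(B i j)) x := by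
      rw [Qinj_eq, pdM_mulS]
    rw [hC]
    have h := ((C2_hasFDerivAt i (δ, V)).mul_const (-(B i i))).fun_add
      (Ssum_hasFDerivAt i (fun j => G i j) (fun j => -(B i j)) (δ, V))
    simp only [pdM]
    rw [h.fderiv]
    simp only [ContinuousLinearMap.add_apply, ContinuousLinearMap.smul_apply,
      smul_eq_mul, DSsum_applyM, C2_applyM, mul_one]
    rw [pdA_Pinj, Qinj_eq]
    ring
  · -- pdA pdA Q = pdA P
    rw [pdA_Qinj]
    simp only [pdA]
    rw [pd_sub_sq_A i (G i i) _ _ _ hP, hP.fderiv]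
  · -- V i * pdM pdA P = pdA P
    rw [pdA_Pinj]
    have hF := hQ.fun_neg
    simp only [pdM]
    rw [pd_sub_sq_M i (B i i) _ _ _ hF]
    simp only [ContinuousLinearMap.neg_apply, ContinuousLinearMap.add_apply,
      ContinuousLinearMap.smul_apply, smul_eq_mul, DSsum_applyM, C2_applyM, mul_one]
    rw [Qinj_eq]
    ring
end
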